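/- Let P ⊆ R^d be a polytope with nonempty interior and let f(x) = V^(2) ReLU(V^(1) x + c^(1)) + c^(2) be a one-hidden-layer ReLU network from R^d to R^m with n + k hidden neurons. Suppose the set of breakpoints of f in int(P) equals (H_1 ∪ ... ∪ H_n) ∩ int(P) for pairwise distinct hyperplanes H_1, ..., H_n, each meeting int(P). Then there exists a one-hidden-layer ReLU network f~(x) = V~^(2) ReLU(V~^(1) x + c~^(1)) + c~^(2) with n + k hidden neurons such that: (1) f~(x) = f(x) for all x in P; (2) for each j in {1, ..., n}, the j-th row V~^(1)_j is nonzero and {x : <V~^(1)_j, x> + c~^(1)_j = 0} = H_j; and (3) for each j in {n+1, ..., n+k}, one has <V~^(1)_j, x> + c~^(1)_j ≠ 0 for all x in P. -/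

import Mathlib

namespace ReLUNet

open scoped BigOperators symmDiff

/-- The standard inner product `⟨w, x⟩ = ∑ j, w j * x j` on `ℝ^d`. -/
def sInner {d : ℕ} (w x : Fin d → ℝ) : ℝ := ∑ j, w j * x j

/-- The Euclidean norm on `ℝ^d`. -/
noncomputable def euclNorm {d : ℕ} (w : Fin d → ℝ) : ℝ := Real.sqrt (∑ j, (w j) ^ 2)

/-- The (affine) hyperplane `{x : ⟨w, x⟩ + β = 0}`. -/
def Hyp {d : ℕ} (w : Fin d → ℝ) (β : ℝ) : Set (Fin d → ℝ) := {x | sInner w x + β = 0}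

/-- A polytope is the convex hull of a finite set. -/
def IsPolytope {d : ℕ} (P : Set (Fin d → ℝ)) : Prop :=
  ∃ s : Finset (Fin d → ℝ), P = convexHull ℝ (↑s : Set (Fin d → ℝ))

/-- The hyperplane `{⟨w,·⟩ + β = 0}` is *inside* `P` if it meets the relative
interior of `P` and `P` is not contained in it. -/
def HypInside {d : ℕ} (w : Fin d → ℝ) (β : ℝ) (P : Set (Fin d → ℝ)) : Prop :=
  (Hyp w β ∩ intrinsicInterior ℝ P).Nonempty ∧ ¬ P ⊆ Hyp w β

/-- The ReLU layer `x ↦ ReLU (W x + b)`. -/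
noncomputable def reluLayer {d n : ℕ} (W : Fin n → Fin d → ℝ) (b : Fin n → ℝ)
    (x : Fin d → ℝ) : Fin n → ℝ :=
  fun i => max (sInner (W i) x + b i) 0

/-- The activation pattern `S_i = {1, …, i} Δ {n}` (in `0`-based indexing:
`{j : j < i} Δ {j : j = n - 1}`). -/
def slabSet (n i : ℕ) : Set (Fin n) :=
  {j : Fin n | (j : ℕ) < i} ∆ {j : Fin n | (j : ℕ) = n - 1}

/-- A slab layer on a polytope `P`: rows nonzero, each hyperplane inside `P`,
and no two hyperplanes meet inside `P`. -/
def IsSlabLayer {d n : ℕ} (W : Fin n → Fin d → ℝ) (b : Fin n → ℝ)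
    (P : Set (Fin d → ℝ)) : Prop :=
  (∀ i, W i ≠ 0) ∧ (∀ i, HypInside (W i) (b i) P) ∧
    ∀ i j, i ≠ j → Hyp (W i) (b i) ∩ Hyp (W j) (b j) ∩ P = ∅

/-- An oriented slab layer: on `P`, the strict activation patterns are exactly
the sets `slabSet n i` for `i = 0, …, n`, and all of them occur. -/
def IsOriented {d n : ℕ} (W : Fin n → Fin d → ℝ) (b : Fin n → ℝ)
    (P : Set (Fin d → ℝ)) : Prop :=
  (∀ x ∈ P, (∀ j, sInner (W j) x + b j ≠ 0) →
      ∃ i ≤ n, {j | 0 < sInner (W j) x + b j} = slabSet n i) ∧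
    (∀ i ≤ n, ∃ x ∈ P, (∀ j, sInner (W j) x + b j ≠ 0) ∧
      {j | 0 < sInner (W j) x + b j} = slabSet n i)

/-- A ReLU layer is transparent on `X` if at every point of `X` some neuron has
nonnegative preactivation. -/
def Transparent {d n : ℕ} (W : Fin n → Fin d → ℝ) (b : Fin n → ℝ)
    (X : Set (Fin d → ℝ)) : Prop :=
  ∀ x ∈ X, ∃ i, 0 ≤ sInner (W i) x + b i

/-- The `ℓ^∞` norm of the pair `(w, β)`. -/
noncomputable def infNormPair {d : ℕ} (w : Fin d → ℝ) (β : ℝ) : ℝ :=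
  max (⨆ j, |w j|) |β|

/-- `(w', β')` is `ε`-close to `(w, β)` after normalizing by the Euclidean norms
of `w'` and `w`, up to a global sign. -/
noncomputable def EpsClose {d : ℕ} (w' : Fin d → ℝ) (β' : ℝ)
    (w : Fin d → ℝ) (β : ℝ) (ε : ℝ) : Prop :=
  min
    (infNormPair (fun j => w' j / euclNorm w' - w j / euclNorm w)
      (β' / euclNorm w' - β / euclNorm w))
    (infNormPair (fun j => w' j / euclNorm w' + w j / euclNorm w)
      (β' / euclNorm w' + β / euclNorm w)) < ε

/-- A one-hidden-layer ReLU network `x ↦ W₂ ReLU (W₁ x + b₁) + b₂`. -/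
noncomputable def oneLayer {d n m : ℕ} (W1 : Fin n → Fin d → ℝ) (b1 : Fin n → ℝ)
    (W2 : Fin m → Fin n → ℝ) (b2 : Fin m → ℝ) (x : Fin d → ℝ) : Fin m → ℝ :=
  fun p => (∑ i, W2 p i * max (sInner (W1 i) x + b1 i) 0) + b2 p

/-- The set of breakpoints of `f`: points near which `f` is not affine. -/
def Breakpoints {d m : ℕ} (f : (Fin d → ℝ) → Fin m → ℝ) : Set (Fin d → ℝ) :=
  {x | ¬ ∃ U : Set (Fin d → ℝ), IsOpen U ∧ x ∈ U ∧
      ∃ (A : Fin m → Fin d → ℝ) (c : Fin m → ℝ),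
        ∀ y ∈ U, ∀ p, f y p = (∑ j, A p j * y j) + c p}


/- ===== auxiliary lemmas ===== -/

lemma sInner_add_right {d : ℕ} (w x y : Fin d → ℝ) :
    sInner w (x + y) = sInner w x + sInner w y := by
  simp [sInner, mul_add, Finset.sum_add_distrib]

lemma sInner_smul_right {d : ℕ} (w x : Fin d → ℝ) (c : ℝ) :
    sInner w (c • x) = c * sInner w x := by
  simp [sInner, Finset.mul_sum]
  exact Finset.sum_congr rfl fun i _ => by ring

lemma sInner_smul_left {d : ℕ} (w x : Fin d → ℝ) (c : ℝ) :
    sInner (c • w) x = c * sInner w x := by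
  simp [sInner, Finset.mul_sum]
  exact Finset.sum_congr rfl fun i _ => by ring

lemma sInner_comm {d : ℕ} (w x : Fin d → ℝ) : sInner w x = sInner x w := by
  simp [sInner, mul_comm]

lemma sInner_sub_left {d : ℕ} (w v x : Fin d → ℝ) :
    sInner (w - v) x = sInner w x - sInner v x := by
  simp [sInner, sub_mul, Finset.sum_sub_distrib]

lemma sInner_zero_left {d : ℕ} (x : Fin d → ℝ) : sInner (0 : Fin d → ℝ) x = 0 := by
  simp [sInner]

lemma sInner_self_pos {d : ℕ} {w : Fin d → ℝ} (hw : w ≠ 0) : 0 < sInner w w := by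
  have h1 : ∃ j, w j ≠ 0 := by
    by_contra h; push_neg at h; exact hw (funext h)
  obtain ⟨j, hj⟩ := h1
  have : sInner w w = ∑ i, w i * w i := rfl
  rw [this]
  apply Finset.sum_pos' (fun i _ => mul_self_nonneg _)
  exact ⟨j, Finset.mem_univ _, mul_self_pos.2 hj⟩

lemma continuous_sInner {d : ℕ} (w : Fin d → ℝ) : Continuous fun x : Fin d → ℝ => sInner w x := by
  unfold sInner
  exact continuous_finset_sum _ fun j _ => (continuous_const.mul (continuous_apply j))

lemma mem_hyp_iff {d : ℕ} {w : Fin d → ℝ} {β : ℝ} {x : Fin d → ℝ} :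
    x ∈ Hyp w β ↔ sInner w x + β = 0 := Iff.rfl

lemma hyp_smul {d : ℕ} (w : Fin d → ℝ) (β : ℝ) {lam : ℝ} (hlam : lam ≠ 0) :
    Hyp (lam • w) (lam * β) = Hyp w β := by
  ext x
  simp only [mem_hyp_iff, sInner_smul_left]
  constructor
  · intro h
    have : lam * (sInner w x + β) = 0 := by linarith [h]
    rcases mul_eq_zero.1 this with h' | h'
    · exact absurd h' hlam
    · exact h'
  · intro h
    have : lam * (sInner w x + β) = 0 := by rw [h]; ring
    linarith [this]

/-- the canonical point on a hyperplane -/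
noncomputable def hypPt {d : ℕ} (w : Fin d → ℝ) (β : ℝ) : Fin d → ℝ :=
  (-β / sInner w w) • w

lemma hypPt_mem {d : ℕ} {w : Fin d → ℝ} (hw : w ≠ 0) (β : ℝ) : hypPt w β ∈ Hyp w β := by
  have h := sInner_self_pos hw
  simp only [mem_hyp_iff, hypPt, sInner_smul_right]
  field_simp
  ring

lemma hyp_ne_univ {d : ℕ} {w : Fin d → ℝ} (hw : w ≠ 0) (β : ℝ) :
    Hyp w β ≠ Set.univ := by
  intro h
  have h1 : hypPt w β + w ∈ Hyp w β := h ▸ Set.mem_univ _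
  have h2 := hypPt_mem hw β
  rw [mem_hyp_iff, sInner_add_right] at h1
  rw [mem_hyp_iff] at h2
  have := sInner_self_pos hw
  linarith

lemma hyp_subset {d : ℕ} {w a : Fin d → ℝ} {β γ : ℝ} (hw : w ≠ 0)
    (h : Hyp w β ⊆ Hyp a γ) : ∃ lam : ℝ, a = lam • w ∧ γ = lam * β := by
  have hww := sInner_self_pos hw
  set x0 := hypPt w β with hx0def
  have hx0 : sInner w x0 + β = 0 := hypPt_mem hw β
  have hx0' : sInner a x0 + γ = 0 := h (hypPt_mem hw β)
  have key : ∀ z : Fin d → ℝ, sInner w z = 0 → sInner a z = 0 := by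
    intro z hz
    have hmem : x0 + z ∈ Hyp w β := by
      rw [mem_hyp_iff, sInner_add_right, hz]; linarith
    have := h hmem
    rw [mem_hyp_iff, sInner_add_right] at this
    linarith
  set lam := sInner a w / sInner w w with hlam
  set v := a - lam • w with hv
  have hwv : sInner w v = 0 := by
    rw [hv, sInner_comm, sInner_sub_left, sInner_smul_left, hlam]
    field_simp
    ring
  have hav : sInner a v = 0 := key v hwv
  have hvv : sInner v v = 0 := by
    rw [hv, sInner_sub_left, sInner_smul_left]
    rw [hv] at hav hwv
    rw [hav, hwv]; ring
  have hv0 : v = 0 := by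
    by_contra hne
    exact absurd hvv (ne_of_gt (sInner_self_pos hne))
  have ha : a = lam • w := by
    rw [hv] at hv0
    exact sub_eq_zero.1 hv0
  refine ⟨lam, ha, ?_⟩
  rw [ha, sInner_smul_left] at hx0'
  linear_combination hx0' - lam * hx0

lemma hyp_eq {d : ℕ} {w a : Fin d → ℝ} {β γ : ℝ} (hw : w ≠ 0) (ha : a ≠ 0)
    (h : Hyp w β = Hyp a γ) : ∃ lam : ℝ, lam ≠ 0 ∧ a = lam • w ∧ γ = lam * β := by
  obtain ⟨lam, h1, h2⟩ := hyp_subset hw h.le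
  refine ⟨lam, ?_, h1, h2⟩
  intro h0
  rw [h0, zero_smul] at h1
  exact ha h1

lemma ne_zero_of_hyp_eq {d : ℕ} {u u' : Fin d → ℝ} {γ γ' : ℝ} (hu' : u' ≠ 0)
    (h : Hyp u γ = Hyp u' γ') : u ≠ 0 := by
  intro h0
  subst h0
  by_cases hγ : γ = 0
  · subst hγ
    have huniv : Hyp (0 : Fin d → ℝ) 0 = Set.univ := by
      ext x; simp [mem_hyp_iff, sInner_zero_left]
    exact hyp_ne_univ hu' γ' (by rw [← h, huniv])
  · have hempty : Hyp (0 : Fin d → ℝ) γ = ∅ := by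
      ext x; simp [mem_hyp_iff, sInner_zero_left, hγ]
    have := hypPt_mem hu' γ'
    rw [← h, hempty] at this
    exact this

lemma isClosed_hyp {d : ℕ} (w : Fin d → ℝ) (β : ℝ) : IsClosed (Hyp w β) := by
  have : Hyp w β = (fun x => sInner w x + β) ⁻¹' {0} := rfl
  rw [this]
  exact IsClosed.preimage ((continuous_sInner w).add continuous_const) isClosed_singleton

lemma sInner_line {d : ℕ} (a x y : Fin d → ℝ) (t : ℝ) :
    sInner a (x + t • (y - x)) = sInner a x + t * (sInner a y - sInner a x) := by
  rw [sInner_add_right, sInner_smul_right, sInner_comm a (y - x), sInner_sub_left,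
    sInner_comm y a, sInner_comm x a]

lemma continuous_line {d : ℕ} (x y : Fin d → ℝ) :
    Continuous fun t : ℝ => x + t • (y - x) :=
  continuous_const.add (continuous_id.smul continuous_const)

/-- single-step avoidance -/
lemma avoid_one {d : ℕ} {w a : Fin d → ℝ} {β γ : ℝ} (hw : w ≠ 0)
    (hne : Hyp a γ ≠ Hyp w β) (hnu : Hyp a γ ≠ Set.univ) {U : Set (Fin d → ℝ)} (hU : IsOpen U)
    {x0 : Fin d → ℝ} (hx0 : x0 ∈ Hyp w β) (hx0U : x0 ∈ U) :
    ∃ x ∈ Hyp w β ∩ U, x ∉ Hyp a γ := by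
  by_cases hmem : x0 ∈ Hyp a γ
  · have hnsub : ¬ Hyp w β ⊆ Hyp a γ := by
      intro hsub
      obtain ⟨lam, h1, h2⟩ := hyp_subset hw hsub
      by_cases hlam : lam = 0
      · rw [hlam, zero_smul] at h1
        rw [hlam, zero_mul] at h2
        apply hnu
        ext x
        simp [mem_hyp_iff, h1, h2, sInner_zero_left]
      · exact hne (by rw [h1, h2, hyp_smul w β hlam])
    obtain ⟨y, hy, hy'⟩ := Set.not_subset.1 hnsub
    have hcont := continuous_line x0 y
    have hop : IsOpen ((fun t : ℝ => x0 + t • (y - x0)) ⁻¹' U) := hU.preimage hcont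
    have h0 : (0 : ℝ) ∈ (fun t : ℝ => x0 + t • (y - x0)) ⁻¹' U := by
      simp [hx0U]
    obtain ⟨δ, hδ, hball⟩ := Metric.isOpen_iff.1 hop 0 h0
    refine ⟨x0 + (δ/2) • (y - x0), ⟨?_, ?_⟩, ?_⟩
    · rw [mem_hyp_iff, sInner_line]
      rw [mem_hyp_iff] at hx0 hy
      have : sInner w y - sInner w x0 = 0 := by linarith
      rw [this]; linarith
    · apply hball
      rw [Metric.mem_ball, Real.dist_eq, sub_zero, abs_of_pos (by linarith)]
      linarith
    · rw [mem_hyp_iff, sInner_line]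
      rw [mem_hyp_iff] at hmem
      intro hcon
      have hy2 : sInner a y + γ ≠ 0 := hy'
      have : (δ/2) * (sInner a y - sInner a x0) = 0 := by linarith
      rcases mul_eq_zero.1 this with h' | h'
      · linarith
      · apply hy2; linarith
  · exact ⟨x0, ⟨hx0, hx0U⟩, hmem⟩

/-- avoid finitely many hyperplanes -/
lemma avoid_many {d : ℕ} {w : Fin d → ℝ} {β : ℝ} (hw : w ≠ 0)
    {ι : Type*} [Fintype ι] (a : ι → Fin d → ℝ) (γ : ι → ℝ)
    (hne : ∀ l, Hyp (a l) (γ l) ≠ Hyp w β) (hnu : ∀ l, Hyp (a l) (γ l) ≠ Set.univ) :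
    ∀ (s : Finset ι) (U : Set (Fin d → ℝ)), IsOpen U →
      ∀ x0 ∈ Hyp w β, x0 ∈ U →
      ∃ x ∈ Hyp w β ∩ U, ∀ l ∈ s, x ∉ Hyp (a l) (γ l) := by
  classical
  intro s
  induction s using Finset.induction_on with
  | empty => exact fun U hU x0 hx0 hx0U => ⟨x0, ⟨hx0, hx0U⟩, by simp⟩
  | @insert l₀ s hl₀ ih =>
    intro U hU x0 hx0 hx0U
    obtain ⟨x1, ⟨hx1, hx1U⟩, hx1a⟩ := avoid_one hw (hne l₀) (hnu l₀) hU hx0 hx0U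
    have hU' : IsOpen (U ∩ (Hyp (a l₀) (γ l₀))ᶜ) := hU.inter (isClosed_hyp _ _).isOpen_compl
    obtain ⟨x, ⟨hx, hxU⟩, hxa⟩ := ih _ hU' x1 hx1 ⟨hx1U, hx1a⟩
    refine ⟨x, ⟨hx, hxU.1⟩, ?_⟩
    intro l hl
    rcases Finset.mem_insert.1 hl with rfl | hl'
    · exact hxU.2
    · exact hxa l hl'

lemma relu_mul (μ s : ℝ) : max (μ * s) 0 = |μ| * max s 0 + min μ 0 * s := by
  rcases le_total 0 μ with hμ | hμ
  · rw [abs_of_nonneg hμ, min_eq_right hμ]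
    rcases le_total 0 s with hs | hs
    · rw [max_eq_left (mul_nonneg hμ hs), max_eq_left hs]; ring
    · rw [max_eq_right (mul_nonpos_of_nonneg_of_nonpos hμ hs), max_eq_right hs]; ring
  · rw [abs_of_nonpos hμ, min_eq_left hμ]
    rcases le_total 0 s with hs | hs
    · rw [max_eq_right (mul_nonpos_of_nonpos_of_nonneg hμ hs), max_eq_left hs]; ring
    · rw [max_eq_left (by nlinarith), max_eq_right hs]; ring


open Finset in
/-- near a point where every neuron is sign-determined, the network is affine -/
lemma locallyAffine {d m N : ℕ} (V1 : Fin N → Fin d → ℝ) (c1 : Fin N → ℝ)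
    (V2 : Fin m → Fin N → ℝ) (c2 : Fin m → ℝ) (xs : Fin d → ℝ)
    (h : ∀ i, V1 i = 0 ∨ sInner (V1 i) xs + c1 i ≠ 0) :
    ∃ U : Set (Fin d → ℝ), IsOpen U ∧ xs ∈ U ∧
      ∃ (A : Fin m → Fin d → ℝ) (c : Fin m → ℝ),
        ∀ y ∈ U, ∀ p, oneLayer V1 c1 V2 c2 y p = (∑ jj, A p jj * y jj) + c p := by
  classical
  set t : Fin N → (Fin d → ℝ) → ℝ := fun i y => sInner (V1 i) y + c1 i with ht
  have tcont : ∀ i, Continuous (t i) := fun i => (continuous_sInner (V1 i)).add continuous_const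
  set W : Fin N → Set (Fin d → ℝ) := fun i =>
    if 0 < t i xs then t i ⁻¹' Set.Ioi 0 else if t i xs < 0 then t i ⁻¹' Set.Iio 0
    else Set.univ with hW
  have hWopen : ∀ i, IsOpen (W i) := by
    intro i
    rw [hW]
    dsimp only
    split_ifs
    · exact isOpen_Ioi.preimage (tcont i)
    · exact isOpen_Iio.preimage (tcont i)
    · exact isOpen_univ
  have hWmem : ∀ i, xs ∈ W i := by
    intro i
    rw [hW]
    dsimp only
    split_ifs with h1 h2
    · exact h1
    · exact h2
    · trivial
  refine ⟨⋂ i, W i, isOpen_iInter_of_finite hWopen, Set.mem_iInter.2 hWmem,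
    fun p jj => ∑ i, if 0 < t i xs then V2 p i * V1 i jj else 0,
    fun p => c2 p + ∑ i, if 0 < t i xs then V2 p i * c1 i else 0, ?_⟩
  intro y hy p
  have hmax : ∀ i, max (t i y) 0 = if 0 < t i xs then t i y else 0 := by
    intro i
    have hyi : y ∈ W i := Set.mem_iInter.1 hy i
    rw [hW] at hyi
    dsimp only at hyi
    by_cases h1 : 0 < t i xs
    · rw [if_pos h1] at hyi ⊢
      exact max_eq_left (le_of_lt (by simpa using hyi))
    · rw [if_neg h1] at hyi ⊢
      by_cases h2 : t i xs < 0
      · rw [if_pos h2] at hyi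
        exact max_eq_right (le_of_lt (by simpa using hyi))
      · have h0 : t i xs = 0 := le_antisymm (not_lt.1 h1) (not_lt.1 h2)
        rcases h i with hv | hv
        · have hty : t i y = t i xs := by
            rw [ht]; dsimp only; rw [hv, sInner_zero_left, sInner_zero_left]
          rw [hty, h0]; simp
        · exact absurd h0 hv
  have step1 : oneLayer V1 c1 V2 c2 y p
      = (∑ i, V2 p i * (if 0 < t i xs then t i y else 0)) + c2 p := by
    unfold oneLayer
    congr 1
    exact Finset.sum_congr rfl fun i _ => by rw [hmax i]
  have step2 : (∑ i, V2 p i * (if 0 < t i xs then t i y else 0))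
      = (∑ i, if 0 < t i xs then ∑ jj, V2 p i * V1 i jj * y jj else 0)
        + (∑ i, if 0 < t i xs then V2 p i * c1 i else 0) := by
    rw [← Finset.sum_add_distrib]
    apply Finset.sum_congr rfl
    intro i _
    split_ifs with hc
    · rw [ht]
      dsimp only
      rw [mul_add, sInner, Finset.mul_sum]
      congr 1
      exact Finset.sum_congr rfl fun jj _ => by ring
    · simp
  have step3 : (∑ i, if 0 < t i xs then ∑ jj, V2 p i * V1 i jj * y jj else 0)
      = ∑ jj, (∑ i, if 0 < t i xs then V2 p i * V1 i jj else 0) * y jj := by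
    have e1 : (∑ i, if 0 < t i xs then ∑ jj, V2 p i * V1 i jj * y jj else 0)
        = ∑ i, ∑ jj, (if 0 < t i xs then V2 p i * V1 i jj * y jj else 0) := by
      apply Finset.sum_congr rfl
      intro i _
      split_ifs
      · rfl
      · exact Finset.sum_const_zero.symm
    rw [e1, Finset.sum_comm]
    apply Finset.sum_congr rfl
    intro jj _
    rw [Finset.sum_mul]
    exact Finset.sum_congr rfl fun i _ => by rw [ite_mul, zero_mul]
  rw [step1, step2, step3]
  ring

open Finset in
/-- the invisible-class coefficient vanishes -/
lemma semiAffine {d m N : ℕ} (V1 : Fin N → Fin d → ℝ) (c1 : Fin N → ℝ)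
    (V2 : Fin m → Fin N → ℝ) (c2 : Fin m → ℝ)
    (u0 : Fin d → ℝ) (γ0 : ℝ) (hu0 : u0 ≠ 0)
    (lamf : Fin N → ℝ) (E : Finset (Fin N))
    (hE : ∀ i ∈ E, V1 i = lamf i • u0 ∧ c1 i = lamf i * γ0)
    (xs : Fin d → ℝ) (hxs : sInner u0 xs + γ0 = 0)
    (hnE : ∀ i ∉ E, V1 i = 0 ∨ sInner (V1 i) xs + c1 i ≠ 0)
    (U : Set (Fin d → ℝ)) (hU : IsOpen U) (hxU : xs ∈ U)
    (A : Fin m → Fin d → ℝ) (c : Fin m → ℝ)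
    (haff : ∀ y ∈ U, ∀ p, oneLayer V1 c1 V2 c2 y p = (∑ jj, A p jj * y jj) + c p) :
    ∀ p, ∑ i ∈ E, V2 p i * |lamf i| = 0 := by
  classical
  intro p
  set t : Fin N → (Fin d → ℝ) → ℝ := fun i y => sInner (V1 i) y + c1 i with ht
  have tcont : ∀ i, Continuous (t i) := fun i => (continuous_sInner (V1 i)).add continuous_const
  set s0 : (Fin d → ℝ) → ℝ := fun y => sInner u0 y + γ0 with hs0
  set W : Fin N → Set (Fin d → ℝ) := fun i =>
    if i ∈ E then Set.univ
    else if 0 < t i xs then t i ⁻¹' Set.Ioi 0 else if t i xs < 0 then t i ⁻¹' Set.Iio 0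
    else Set.univ with hW
  have hWopen : ∀ i, IsOpen (W i) := by
    intro i
    rw [hW]; dsimp only
    split_ifs
    · exact isOpen_univ
    · exact isOpen_Ioi.preimage (tcont i)
    · exact isOpen_Iio.preimage (tcont i)
    · exact isOpen_univ
  have hWmem : ∀ i, xs ∈ W i := by
    intro i
    rw [hW]; dsimp only
    split_ifs with h0 h1 h2
    · trivial
    · exact h1
    · exact h2
    · trivial
  set L : (Fin d → ℝ) → ℝ := fun y =>
    (∑ i ∈ E, V2 p i * (min (lamf i) 0 * s0 y))
    + (∑ i ∈ Eᶜ, if 0 < t i xs then V2 p i * t i y else 0) + c2 p with hL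
  -- key formula on W
  have key : ∀ y ∈ ⋂ i, W i,
      oneLayer V1 c1 V2 c2 y p = (∑ i ∈ E, V2 p i * |lamf i|) * max (s0 y) 0 + L y := by
    intro y hy
    have hmax : ∀ i ∈ Eᶜ, V2 p i * max (t i y) 0 = if 0 < t i xs then V2 p i * t i y else 0 := by
      intro i hiE
      rw [Finset.mem_compl] at hiE
      have hyi : y ∈ W i := Set.mem_iInter.1 hy i
      rw [hW] at hyi
      dsimp only at hyi
      rw [if_neg hiE] at hyi
      by_cases h1 : 0 < t i xs
      · rw [if_pos h1] at hyi ⊢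
        rw [max_eq_left (le_of_lt (by simpa using hyi))]
      · rw [if_neg h1] at hyi ⊢
        by_cases h2 : t i xs < 0
        · rw [if_pos h2] at hyi
          rw [max_eq_right (le_of_lt (by simpa using hyi))]; ring
        · have h0 : t i xs = 0 := le_antisymm (not_lt.1 h1) (not_lt.1 h2)
          rcases hnE i hiE with hv | hv
          · have hty : t i y = t i xs := by
              rw [ht]; dsimp only; rw [hv, sInner_zero_left, sInner_zero_left]
            rw [hty, h0]; simp
          · exact absurd h0 hv
    have hErel : ∀ i ∈ E, V2 p i * max (t i y) 0
        = V2 p i * |lamf i| * max (s0 y) 0 + V2 p i * (min (lamf i) 0 * s0 y) := by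
      intro i hi
      obtain ⟨h1, h2⟩ := hE i hi
      have hti : t i y = lamf i * s0 y := by
        rw [ht, hs0]; dsimp only; rw [h1, h2, sInner_smul_left]; ring
      rw [hti, relu_mul]; ring
    unfold oneLayer
    rw [← Finset.sum_add_sum_compl E (fun i => V2 p i * max (t i y) 0)]
    rw [Finset.sum_congr rfl hErel, Finset.sum_congr rfl hmax]
    rw [Finset.sum_add_distrib, ← Finset.sum_mul]
    rw [hL]
    ring
  -- pick ε
  have hcont : Continuous fun ε : ℝ => xs + ε • u0 :=
    continuous_const.add (continuous_id.smul continuous_const)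
  have hopen : IsOpen ((fun ε : ℝ => xs + ε • u0) ⁻¹' (U ∩ ⋂ i, W i)) :=
    (hU.inter (isOpen_iInter_of_finite hWopen)).preimage hcont
  have h0mem : (0 : ℝ) ∈ (fun ε : ℝ => xs + ε • u0) ⁻¹' (U ∩ ⋂ i, W i) := by
    simp only [Set.mem_preimage, zero_smul, add_zero]
    exact ⟨hxU, Set.mem_iInter.2 hWmem⟩
  obtain ⟨δ, hδ, hball⟩ := Metric.isOpen_iff.1 hopen 0 h0mem
  set ε := δ / 2 with hε
  have hεpos : 0 < ε := by rw [hε]; linarith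
  have hmem : ∀ τ : ℝ, |τ| < δ → xs + τ • u0 ∈ U ∩ ⋂ i, W i := by
    intro τ hτ
    apply hball
    rw [Metric.mem_ball, Real.dist_eq, sub_zero]
    exact hτ
  have hyp : xs + ε • u0 ∈ U ∩ ⋂ i, W i := hmem ε (by rw [abs_of_pos hεpos]; rw [hε]; linarith)
  have hym : xs + (-ε) • u0 ∈ U ∩ ⋂ i, W i := hmem (-ε) (by rw [abs_neg, abs_of_pos hεpos, hε]; linarith)
  have hy0 : xs + (0:ℝ) • u0 ∈ U ∩ ⋂ i, W i := hmem 0 (by simpa using hδ)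
  -- values of s0 along line
  have hs0line : ∀ τ : ℝ, s0 (xs + τ • u0) = τ * sInner u0 u0 := by
    intro τ
    rw [hs0]; dsimp only
    rw [sInner_add_right, sInner_smul_right]
    linarith [hxs]
  have hν : 0 < sInner u0 u0 := sInner_self_pos hu0
  have h00 : s0 xs = 0 := hxs
  -- midpoint property of L
  have hA : (∑ i ∈ E, V2 p i * (min (lamf i) 0 * s0 (xs + ε • u0)))
      + (∑ i ∈ E, V2 p i * (min (lamf i) 0 * s0 (xs + (-ε) • u0)))
      = 2 * ∑ i ∈ E, V2 p i * (min (lamf i) 0 * s0 xs) := by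
    rw [← Finset.sum_add_distrib, Finset.mul_sum]
    apply Finset.sum_congr rfl
    intro i _
    rw [hs0line, hs0line, h00]
    ring
  have e1 : ∀ τ : ℝ, ∀ i, t i (xs + τ • u0) = t i xs + τ * sInner (V1 i) u0 := by
    intro τ i
    rw [ht]; dsimp only
    rw [sInner_add_right, sInner_smul_right]; ring
  have hB : (∑ i ∈ Eᶜ, if 0 < t i xs then V2 p i * t i (xs + ε • u0) else 0)
      + (∑ i ∈ Eᶜ, if 0 < t i xs then V2 p i * t i (xs + (-ε) • u0) else 0)
      = 2 * ∑ i ∈ Eᶜ, if 0 < t i xs then V2 p i * t i xs else 0 := by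
    rw [← Finset.sum_add_distrib, Finset.mul_sum]
    apply Finset.sum_congr rfl
    intro i _
    split_ifs
    · rw [e1, e1]; ring
    · ring
  have hLmid : L (xs + ε • u0) + L (xs + (-ε) • u0) = 2 * L xs := by
    rw [hL]; dsimp only
    linarith [hA, hB]
  -- affine midpoint
  have hAmid : ((∑ jj, A p jj * (xs + ε • u0) jj) + c p)
      + ((∑ jj, A p jj * (xs + (-ε) • u0) jj) + c p)
      = 2 * ((∑ jj, A p jj * xs jj) + c p) := by
    have : (∑ jj, A p jj * (xs + ε • u0) jj) + (∑ jj, A p jj * (xs + (-ε) • u0) jj)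
        = 2 * ∑ jj, A p jj * xs jj := by
      rw [← Finset.sum_add_distrib, Finset.mul_sum]
      apply Finset.sum_congr rfl
      intro jj _
      have hp1 : (xs + ε • u0) jj = xs jj + ε * u0 jj := by simp
      have hp2 : (xs + (-ε) • u0) jj = xs jj + (-ε) * u0 jj := by simp
      rw [hp1, hp2]; ring
    linarith [this]
  have net1 : oneLayer V1 c1 V2 c2 (xs + ε • u0) p + oneLayer V1 c1 V2 c2 (xs + (-ε) • u0) p
      = 2 * oneLayer V1 c1 V2 c2 xs p := by
    rw [haff _ hyp.1 p, haff _ hym.1 p, haff _ hxU p]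
    exact hAmid
  have k1 := key _ hyp.2
  have k2 := key _ hym.2
  have k3 := key xs (Set.mem_iInter.2 hWmem)
  rw [hs0line, max_eq_left (by positivity)] at k1
  rw [hs0line] at k2
  have hneg : max (-ε * sInner u0 u0) 0 = 0 := max_eq_right (by nlinarith)
  rw [hneg, mul_zero] at k2
  rw [h00] at k3
  have hmax0 : max (0:ℝ) 0 = 0 := by simp
  rw [hmax0, mul_zero] at k3
  have hfin : (∑ i ∈ E, V2 p i * |lamf i|) * (ε * sInner u0 u0) = 0 := by
    rw [k1, k2, k3] at net1
    linarith [hLmid, net1]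
  exact (mul_eq_zero.1 hfin).resolve_right (ne_of_gt (mul_pos hεpos hν))

lemma signConst {d : ℕ} {P : Set (Fin d → ℝ)} (hconv : Convex ℝ P)
    (hcl : P ⊆ closure (interior P)) (a : Fin d → ℝ) (bb : ℝ)
    (h : ∀ x ∈ interior P, sInner a x + bb ≠ 0) :
    (∀ x ∈ P, 0 ≤ sInner a x + bb) ∨ (∀ x ∈ P, sInner a x + bb ≤ 0) := by
  set g : (Fin d → ℝ) → ℝ := fun x => sInner a x + bb with hg
  have gcont : Continuous g := (continuous_sInner a).add continuous_const
  by_contra hcon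
  push_neg at hcon
  obtain ⟨⟨x1, hx1, hx1'⟩, ⟨x2, hx2, hx2'⟩⟩ := hcon
  -- find interior points with negative / positive values
  have find : ∀ x ∈ P, g x < 0 → ∃ y ∈ interior P, g y < 0 := by
    intro x hx hgx
    have hopen : IsOpen (g ⁻¹' Set.Iio 0) := isOpen_Iio.preimage gcont
    have hxcl := hcl hx
    rw [mem_closure_iff] at hxcl
    obtain ⟨y, hy1, hy2⟩ := hxcl _ hopen hgx
    exact ⟨y, hy2, hy1⟩
  have find' : ∀ x ∈ P, 0 < g x → ∃ y ∈ interior P, 0 < g y := by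
    intro x hx hgx
    have hopen : IsOpen (g ⁻¹' Set.Ioi 0) := isOpen_Ioi.preimage gcont
    have hxcl := hcl hx
    rw [mem_closure_iff] at hxcl
    obtain ⟨y, hy1, hy2⟩ := hxcl _ hopen hgx
    exact ⟨y, hy2, hy1⟩
  obtain ⟨y1, hy1, hgy1⟩ := find x1 hx1 hx1'
  obtain ⟨y2, hy2, hgy2⟩ := find' x2 hx2 hx2'
  -- IVT on segment
  have hφ : Continuous fun τ : ℝ => g (y1 + τ • (y2 - y1)) :=
    gcont.comp (continuous_const.add (continuous_id.smul continuous_const))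
  have hIcc : (0:ℝ) ∈ Set.Icc (g (y1 + (0:ℝ) • (y2 - y1))) (g (y1 + (1:ℝ) • (y2 - y1))) := by
    constructor
    · simpa using le_of_lt hgy1
    · have : y1 + (1:ℝ) • (y2 - y1) = y2 := by
        funext jj; simp
      rw [this]; exact le_of_lt hgy2
  have := intermediate_value_Icc (by norm_num : (0:ℝ) ≤ 1) hφ.continuousOn hIcc
  obtain ⟨τ, hτ, hgτ⟩ := this
  have hmem : y1 + τ • (y2 - y1) ∈ interior P := by
    have hic := hconv.interior
    have := hic hy1 hy2 (by linarith [hτ.1, hτ.2] : (0:ℝ) ≤ 1 - τ) hτ.1 (by ring)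
    convert this using 1
    funext jj
    simp [Pi.smul_apply, smul_eq_mul]
    ring
  exact h _ hmem hgτ

lemma existsM {d : ℕ} {P : Set (Fin d → ℝ)} (hPc : IsCompact P) (a : Fin d → ℝ) (bb : ℝ) :
    ∃ M : ℝ, ∀ x ∈ P, 0 < sInner a x + bb + M := by
  rcases P.eq_empty_or_nonempty with rfl | hne
  · exact ⟨0, fun x hx => absurd hx (Set.notMem_empty x)⟩
  · have gcont : ContinuousOn (fun x => sInner a x + bb) P :=
      ((continuous_sInner a).add continuous_const).continuousOn
    obtain ⟨x0, hx0, hmin⟩ := hPc.exists_isMinOn hne gcont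
    refine ⟨1 - (sInner a x0 + bb), fun x hx => ?_⟩
    have := hmin hx
    simp only [Set.mem_setOf_eq] at this
    linarith [this]

/-- **Compressing the visible hyperplanes.**
If a one-hidden-layer network with `n + k` neurons has exactly `n` pairwise
distinct breakpoint hyperplanes inside the interior of a polytope `P`, then the
same function on `P` is computed by a one-hidden-layer network with `n + k`
neurons in which the first `n` neurons have exactly these hyperplanes as zero
sets and the last `k` neurons have preactivation nowhere zero on `P`. -/
theorem compress_visible_hyperplanes (d m n k : ℕ)
    (P : Set (Fin d → ℝ)) (hP : IsPolytope P) (hPint : (interior P).Nonempty)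
    (V1 : Fin (n + k) → Fin d → ℝ) (c1 : Fin (n + k) → ℝ)
    (V2 : Fin m → Fin (n + k) → ℝ) (c2 : Fin m → ℝ)
    (w : Fin n → Fin d → ℝ) (β : Fin n → ℝ)
    (hw : ∀ j, w j ≠ 0)
    (hdist : ∀ i j : Fin n, i ≠ j → Hyp (w i) (β i) ≠ Hyp (w j) (β j))
    (hmeet : ∀ j, (Hyp (w j) (β j) ∩ interior P).Nonempty)
    (hbp : Breakpoints (oneLayer V1 c1 V2 c2) ∩ interior P =
      (⋃ j, Hyp (w j) (β j)) ∩ interior P) :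
    ∃ (V1' : Fin (n + k) → Fin d → ℝ) (c1' : Fin (n + k) → ℝ)
      (V2' : Fin m → Fin (n + k) → ℝ) (c2' : Fin m → ℝ),
      (∀ x ∈ P, ∀ p, oneLayer V1' c1' V2' c2' x p = oneLayer V1 c1 V2 c2 x p) ∧
      (∀ j : Fin n, V1' (Fin.castAdd k j) ≠ 0 ∧
        {x | sInner (V1' (Fin.castAdd k j)) x + c1' (Fin.castAdd k j) = 0} =
          Hyp (w j) (β j)) ∧
      (∀ j : Fin k, ∀ x ∈ P, sInner (V1' (Fin.natAdd n j)) x + c1' (Fin.natAdd n j) ≠ 0) := by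
  classical
  obtain ⟨sF, hPs⟩ := hP
  have hPcompact : IsCompact P := by
    rw [hPs]; exact sF.finite_toSet.isCompact_convexHull ℝ
  have hPconv : Convex ℝ P := by rw [hPs]; exact convex_convexHull ℝ _
  have hPsubcl : P ⊆ closure (interior P) := by
    intro x hxP
    obtain ⟨y0, hy0⟩ := hPint
    rw [mem_closure_iff]
    intro U hU hxU
    have hcont : Continuous fun t : ℝ => t • y0 + (1 - t) • x :=
      (continuous_id.smul continuous_const).add
        ((continuous_const.sub continuous_id).smul continuous_const)
    have h0 : (0 : ℝ) ∈ (fun t : ℝ => t • y0 + (1 - t) • x) ⁻¹' U := by simp [hxU]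
    obtain ⟨δ, hδ, hball⟩ := Metric.isOpen_iff.1 (hU.preimage hcont) 0 h0
    set tq := min (δ / 2) (1 / 2) with htq
    have htpos : 0 < tq := lt_min (by linarith) (by norm_num)
    have htle : tq ≤ 1 / 2 := min_le_right _ _
    have h1 : tq • y0 + (1 - tq) • x ∈ U := by
      apply hball
      rw [Metric.mem_ball, Real.dist_eq, sub_zero, abs_of_pos htpos]
      calc tq ≤ δ / 2 := min_le_left _ _
        _ < δ := by linarith
    have h2 : tq • y0 + (1 - tq) • x ∈ interior P :=
      hPconv.combo_interior_closure_mem_interior hy0 (subset_closure hxP) htpos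
        (by linarith) (by ring)
    exact ⟨_, h1, h2⟩
  set Matches : Fin (n + k) → Fin n → Prop :=
    fun i j => ∃ lam : ℝ, lam ≠ 0 ∧ V1 i = lam • w j ∧ c1 i = lam * β j with hMatchesDef
  have matches_hyp : ∀ i j, Matches i j → Hyp (V1 i) (c1 i) = Hyp (w j) (β j) := by
    rintro i j ⟨lam, hl0, h1, h2⟩
    rw [h1, h2, hyp_smul _ _ hl0]
  have matches_V1 : ∀ i j, Matches i j → V1 i ≠ 0 := by
    rintro i j ⟨lam, hl0, h1, -⟩
    rw [h1]; exact smul_ne_zero hl0 (hw j)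
  have matches_uniq : ∀ i j j', Matches i j → Matches i j' → j = j' := by
    intro i j j' h h'
    by_contra hne
    exact hdist j j' hne ((matches_hyp i j h).symm.trans (matches_hyp i j' h'))
  have lam_uniq : ∀ (j : Fin n) (lam lam' : ℝ), lam • w j = lam' • w j → lam = lam' := by
    intro j lam lam' h
    by_contra hne
    have h1 : (lam - lam') • w j = 0 := by rw [sub_smul, h, sub_self]
    rcases smul_eq_zero.1 h1 with h' | h'
    · exact hne (by linarith [sub_eq_zero.1 h'])
    · exact hw j h'
  have hbpSup : ∀ (x : Fin d → ℝ) (j : Fin n), x ∈ Hyp (w j) (β j) → x ∈ interior P →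
      x ∈ Breakpoints (oneLayer V1 c1 V2 c2) := by
    intro x j hxH hxI
    have h1 : x ∈ (⋃ j, Hyp (w j) (β j)) ∩ interior P := ⟨Set.mem_iUnion.2 ⟨j, hxH⟩, hxI⟩
    rw [← hbp] at h1
    exact h1.1
  have hbpSub : ∀ x : Fin d → ℝ, x ∈ interior P → (∀ j, x ∉ Hyp (w j) (β j)) →
      x ∉ Breakpoints (oneLayer V1 c1 V2 c2) := by
    intro x hxI hnj hB
    have h1 : x ∈ Breakpoints (oneLayer V1 c1 V2 c2) ∩ interior P := ⟨hB, hxI⟩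
    rw [hbp] at h1
    obtain ⟨j, hj⟩ := Set.mem_iUnion.1 h1.1
    exact hnj j hj
  have hHyp01 : Hyp (0 : Fin d → ℝ) 1 = ∅ := by
    ext z; simp [mem_hyp_iff, sInner_zero_left]
  -- every breakpoint hyperplane is matched by some neuron
  have hvis : ∀ j : Fin n, ∃ i, Matches i j := by
    intro j
    by_contra hno
    push_neg at hno
    obtain ⟨x0, hx0H, hx0I⟩ := hmeet j
    set aH : Fin (n + k) → Fin d → ℝ := fun i => if V1 i = 0 then 0 else V1 i with haH
    set γH : Fin (n + k) → ℝ := fun i => if V1 i = 0 then 1 else c1 i with hγH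
    have hne : ∀ i, Hyp (aH i) (γH i) ≠ Hyp (w j) (β j) := by
      intro i
      rw [haH, hγH]; dsimp only
      split_ifs with h0
      · rw [hHyp01]
        intro h
        rw [← h] at hx0H
        exact hx0H
      · intro h
        obtain ⟨lam, hl0, h1, h2⟩ := hyp_eq (hw j) h0 h.symm
        exact hno i ⟨lam, hl0, h1, h2⟩
    have hnu : ∀ i, Hyp (aH i) (γH i) ≠ Set.univ := by
      intro i
      rw [haH, hγH]; dsimp only
      split_ifs with h0
      · rw [hHyp01]; exact Set.empty_ne_univ
      · exact hyp_ne_univ h0 _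
    obtain ⟨xs, ⟨hxsH, hxsI⟩, hxsA⟩ :=
      avoid_many (hw j) aH γH hne hnu Finset.univ (interior P) isOpen_interior x0 hx0H hx0I
    have hgen : ∀ i, V1 i = 0 ∨ sInner (V1 i) xs + c1 i ≠ 0 := by
      intro i
      by_cases h0 : V1 i = 0
      · exact Or.inl h0
      · right
        have h1 := hxsA i (Finset.mem_univ i)
        rw [haH, hγH] at h1; dsimp only at h1
        rw [if_neg h0, if_neg h0] at h1
        exact fun hc => h1 hc
    obtain ⟨U, hU, hxsU, A, c, haff⟩ := locallyAffine V1 c1 V2 c2 xs hgen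
    exact hbpSup xs j hxsH hxsI ⟨U, hU, hxsU, A, c, haff⟩
  have hrep : ∀ j : Fin n, ∃ i, ∃ lam : ℝ, lam ≠ 0 ∧ V1 i = lam • w j ∧ c1 i = lam * β j := hvis
  choose rep lamR hlamR0 hlamR1 hlamR2 using hrep
  have hrepM : ∀ j, Matches (rep j) j := fun j => ⟨lamR j, hlamR0 j, hlamR1 j, hlamR2 j⟩
  set σ : Fin n → ℝ := fun j => if 0 < lamR j then 1 else -1 with hσdef
  have hσ0 : ∀ j, σ j ≠ 0 := by
    intro j; rw [hσdef]; dsimp only; split_ifs <;> norm_num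
  have hσsq : ∀ j, σ j * σ j = 1 := by
    intro j; rw [hσdef]; dsimp only; split_ifs <;> norm_num
  have hσabs : ∀ (j : Fin n) (r : ℝ), |r * σ j| = |r| := by
    intro j r; rw [hσdef]; dsimp only; split_ifs <;> simp [abs_mul]
  have hσlamR : ∀ j, 0 < lamR j * σ j := by
    intro j
    rw [hσdef]; dsimp only
    split_ifs with h
    · simpa using h
    · have h2 : lamR j < 0 := lt_of_le_of_ne (not_lt.1 h) (hlamR0 j)
      nlinarith
  have hrepinj : Function.Injective rep := by
    intro j j' h
    exact matches_uniq (rep j) j j' (hrepM j) (by rw [h]; exact hrepM j')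
  have hlamM' : ∀ (i : Fin (n + k)) (j : Fin n), ∃ lam : ℝ,
      Matches i j → (lam ≠ 0 ∧ V1 i = lam • w j ∧ c1 i = lam * β j) := by
    intro i j
    by_cases h : Matches i j
    · obtain ⟨lam, hl⟩ := h
      exact ⟨lam, fun _ => hl⟩
    · exact ⟨0, fun hc => absurd hc h⟩
  choose lamM hlamM using hlamM'
  have hlam2' : ∀ i i0 : Fin (n + k), ∃ lam : ℝ,
      V1 i0 ≠ 0 → Hyp (V1 i) (c1 i) = Hyp (V1 i0) (c1 i0) →
        (lam ≠ 0 ∧ V1 i = lam • V1 i0 ∧ c1 i = lam * c1 i0) := by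
    intro i i0
    by_cases h : V1 i0 ≠ 0 ∧ Hyp (V1 i) (c1 i) = Hyp (V1 i0) (c1 i0)
    · obtain ⟨lam, hl0, h1, h2⟩ := hyp_eq h.1 (ne_zero_of_hyp_eq h.1 h.2) h.2.symm
      exact ⟨lam, fun _ _ => ⟨hl0, h1, h2⟩⟩
    · exact ⟨0, fun h1 h2 => absurd ⟨h1, h2⟩ h⟩
  choose lam2 hlam2 using hlam2'
  have hbne : ∀ i : Fin (n + k), (Finset.univ.filter
      (fun i' => Hyp (V1 i') (c1 i') = Hyp (V1 i) (c1 i))).Nonempty :=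
    fun i => ⟨i, Finset.mem_filter.2 ⟨Finset.mem_univ i, rfl⟩⟩
  set b : Fin (n + k) → Fin (n + k) := fun i =>
    (Finset.univ.filter (fun i' => Hyp (V1 i') (c1 i') = Hyp (V1 i) (c1 i))).min' (hbne i)
    with hbdef
  have min'_congr : ∀ (S S' : Finset (Fin (n + k))) (hS : S.Nonempty) (hS' : S'.Nonempty),
      S = S' → S.min' hS = S'.min' hS' := by
    rintro S S' hS hS' rfl; rfl
  have hb_same : ∀ i, Hyp (V1 (b i)) (c1 (b i)) = Hyp (V1 i) (c1 i) := by
    intro i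
    have h1 : b i ∈ Finset.univ.filter
        (fun i' => Hyp (V1 i') (c1 i') = Hyp (V1 i) (c1 i)) := by
      rw [hbdef]; exact Finset.min'_mem _ _
    exact (Finset.mem_filter.1 h1).2
  have hb_eq : ∀ i i', Hyp (V1 i') (c1 i') = Hyp (V1 i) (c1 i) → b i' = b i := by
    intro i i' h
    rw [hbdef]; dsimp only
    apply min'_congr
    apply Finset.filter_congr
    intro z _
    rw [h]
  -- the invisible classes cancel
  have hC : ∀ i0 : Fin (n + k), V1 i0 ≠ 0 → (∀ j, ¬ Matches i0 j) →
      (Hyp (V1 i0) (c1 i0) ∩ interior P).Nonempty →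
      ∀ p, ∑ i ∈ Finset.univ.filter
          (fun i => Hyp (V1 i) (c1 i) = Hyp (V1 i0) (c1 i0)), V2 p i * |lam2 i i0| = 0 := by
    intro i0 hV10 hnom hcross p
    obtain ⟨x0, hx0H, hx0I⟩ := hcross
    set aH : (Fin (n + k) ⊕ Fin n) → Fin d → ℝ := fun l => Sum.elim
      (fun i => if V1 i = 0 ∨ Hyp (V1 i) (c1 i) = Hyp (V1 i0) (c1 i0) then 0 else V1 i)
      (fun j => w j) l with haH
    set γH : (Fin (n + k) ⊕ Fin n) → ℝ := fun l => Sum.elim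
      (fun i => if V1 i = 0 ∨ Hyp (V1 i) (c1 i) = Hyp (V1 i0) (c1 i0) then 1 else c1 i)
      (fun j => β j) l with hγH
    have hne : ∀ l, Hyp (aH l) (γH l) ≠ Hyp (V1 i0) (c1 i0) := by
      rintro (i | j)
      · rw [haH, hγH]; simp only [Sum.elim_inl]
        split_ifs with h0
        · rw [hHyp01]
          intro h
          have h1 := hypPt_mem hV10 (c1 i0)
          rw [← h] at h1
          exact h1
        · push_neg at h0
          exact h0.2
      · rw [haH, hγH]; simp only [Sum.elim_inr]
        intro h
        obtain ⟨lam, hl0, h1, h2⟩ := hyp_eq (hw j) hV10 h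
        exact hnom j ⟨lam, hl0, h1, h2⟩
    have hnu : ∀ l, Hyp (aH l) (γH l) ≠ Set.univ := by
      rintro (i | j)
      · rw [haH, hγH]; simp only [Sum.elim_inl]
        split_ifs with h0
        · rw [hHyp01]; exact Set.empty_ne_univ
        · push_neg at h0
          exact hyp_ne_univ h0.1 _
      · rw [haH, hγH]; simp only [Sum.elim_inr]
        exact hyp_ne_univ (hw j) _
    obtain ⟨xs, ⟨hxsH, hxsI⟩, hxsA⟩ :=
      avoid_many hV10 aH γH hne hnu Finset.univ (interior P) isOpen_interior x0 hx0H hx0I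
    have hnB : xs ∉ Breakpoints (oneLayer V1 c1 V2 c2) := by
      apply hbpSub xs hxsI
      intro j hj
      have h1 := hxsA (Sum.inr j) (Finset.mem_univ _)
      rw [haH, hγH] at h1; simp only [Sum.elim_inr] at h1
      exact h1 hj
    rw [Breakpoints, Set.mem_setOf_eq, not_not] at hnB
    obtain ⟨U, hU, hxsU, A, c, haff⟩ := hnB
    have hE : ∀ i ∈ Finset.univ.filter
        (fun i => Hyp (V1 i) (c1 i) = Hyp (V1 i0) (c1 i0)),
        V1 i = lam2 i i0 • V1 i0 ∧ c1 i = lam2 i i0 * c1 i0 := by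
      intro i hi
      obtain ⟨-, h1, h2⟩ := hlam2 i i0 hV10 (Finset.mem_filter.1 hi).2
      exact ⟨h1, h2⟩
    have hnE : ∀ i ∉ Finset.univ.filter
        (fun i => Hyp (V1 i) (c1 i) = Hyp (V1 i0) (c1 i0)),
        V1 i = 0 ∨ sInner (V1 i) xs + c1 i ≠ 0 := by
      intro i hi
      rw [Finset.mem_filter] at hi
      push_neg at hi
      have hih := hi (Finset.mem_univ i)
      by_cases h0 : V1 i = 0
      · exact Or.inl h0
      · right
        have h1 := hxsA (Sum.inl i) (Finset.mem_univ _)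
        rw [haH, hγH] at h1; simp only [Sum.elim_inl] at h1
        rw [if_neg (by push_neg; exact ⟨h0, hih⟩), if_neg (by push_neg; exact ⟨h0, hih⟩)] at h1
        exact fun hc => h1 hc
    exact semiAffine V1 c1 V2 c2 (V1 i0) (c1 i0) hV10 (fun i => lam2 i i0) _ hE xs hxsH hnE
      U hU hxsU A c haff p
  -- index bookkeeping for the spare slots
  set T : Finset (Fin (n + k)) := Finset.univ \ Finset.image rep Finset.univ with hTdef
  have hTcard : T.card = k := by
    rw [hTdef, Finset.card_sdiff_of_subset (Finset.subset_univ _),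
      Finset.card_image_of_injective _ hrepinj]
    simp only [Finset.card_univ, Fintype.card_fin]
    omega
  set ι : Fin k → Fin (n + k) := fun q => T.orderEmbOfFin hTcard q with hιdef
  have hι_inj : Function.Injective ι := by
    intro a b h
    rw [hιdef] at h
    exact (T.orderEmbOfFin hTcard).injective h
  have hι_image : Finset.image ι Finset.univ = T := by
    ext a
    simp only [Finset.mem_image, Finset.mem_univ, true_and]
    constructor
    · rintro ⟨q, rfl⟩
      rw [hιdef]; exact Finset.orderEmbOfFin_mem _ _ _
    · intro ha
      have h2 : a ∈ Set.range (T.orderEmbOfFin hTcard) := by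
        rw [Finset.range_orderEmbOfFin]; exact ha
      obtain ⟨q, hq⟩ := h2
      exact ⟨q, by rw [hιdef]; exact hq⟩
  -- the affine replacement data for each neuron
  set AB1 : Fin (n + k) → Fin d → ℝ := fun i =>
    if V1 i = 0 then 0
    else if hm : ∃ j, Matches i j then
      if lamM i hm.choose * σ hm.choose < 0 then V1 i else 0
    else if (Hyp (V1 i) (c1 i) ∩ interior P).Nonempty then
      if lam2 i (b i) < 0 then V1 i else 0
    else if ∀ y ∈ P, 0 ≤ sInner (V1 i) y + c1 i then V1 i else 0 with hAB1
  set AB2 : Fin (n + k) → ℝ := fun i =>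
    if V1 i = 0 then max (c1 i) 0
    else if hm : ∃ j, Matches i j then
      if lamM i hm.choose * σ hm.choose < 0 then c1 i else 0
    else if (Hyp (V1 i) (c1 i) ∩ interior P).Nonempty then
      if lam2 i (b i) < 0 then c1 i else 0
    else if ∀ y ∈ P, 0 ≤ sInner (V1 i) y + c1 i then c1 i else 0 with hAB2
  choose M hM using fun i => existsM hPcompact (AB1 i) (AB2 i)
  -- representatives carry no affine part
  have hABrep : ∀ j, AB1 (rep j) = 0 ∧ AB2 (rep j) = 0 := by
    intro j
    have hmj := hrepM j
    have hV : V1 (rep j) ≠ 0 := matches_V1 _ _ hmj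
    have hmE : ∃ j', Matches (rep j) j' := ⟨j, hmj⟩
    have hch : hmE.choose = j := matches_uniq _ _ _ hmE.choose_spec hmj
    have hlamval : lamM (rep j) j = lamR j := by
      obtain ⟨-, h1, -⟩ := hlamM (rep j) j hmj
      exact lam_uniq j _ _ (h1.symm.trans (hlamR1 j))
    have hcond : ¬ lamM (rep j) hmE.choose * σ hmE.choose < 0 := by
      rw [hch, hlamval]
      exact not_lt.2 (le_of_lt (hσlamR j))
    constructor
    · rw [hAB1]; dsimp only
      rw [if_neg hV, dif_pos hmE, if_neg hcond]
    · rw [hAB2]; dsimp only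
      rw [if_neg hV, dif_pos hmE, if_neg hcond]
  -- the key pointwise decomposition on P
  have hFmain : ∀ x ∈ P, ∀ i : Fin (n + k),
      max (sInner (V1 i) x + c1 i) 0
        = (sInner (AB1 i) x + AB2 i)
          + (∑ j, if Matches i j then |lamM i j| * max (σ j * (sInner (w j) x + β j)) 0 else 0)
          + (if (¬ (∃ j, Matches i j)) ∧ V1 i ≠ 0 ∧ (Hyp (V1 i) (c1 i) ∩ interior P).Nonempty
             then |lam2 i (b i)| * max (sInner (V1 (b i)) x + c1 (b i)) 0 else 0) := by
    intro x hx i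
    by_cases h0 : V1 i = 0
    · have hsum0 : (∑ j, if Matches i j then
          |lamM i j| * max (σ j * (sInner (w j) x + β j)) 0 else 0) = 0 :=
        Finset.sum_eq_zero (fun j _ => if_neg (fun hmj => matches_V1 i j hmj h0))
      have hite2 : ¬ ((¬ (∃ j, Matches i j)) ∧ V1 i ≠ 0 ∧
          (Hyp (V1 i) (c1 i) ∩ interior P).Nonempty) := fun hcon => hcon.2.1 h0
      rw [hAB1, hAB2]; dsimp only
      rw [if_pos h0, if_pos h0, hsum0, if_neg hite2, h0, sInner_zero_left]
      simp
    by_cases hm : ∃ j, Matches i j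
    · obtain ⟨hl0, h1, h2⟩ := hlamM i hm.choose hm.choose_spec
      have hsum : (∑ j', if Matches i j' then
          |lamM i j'| * max (σ j' * (sInner (w j') x + β j')) 0 else 0)
          = |lamM i hm.choose| * max (σ hm.choose * (sInner (w hm.choose) x + β hm.choose)) 0 := by
        rw [Finset.sum_eq_single hm.choose]
        · rw [if_pos hm.choose_spec]
        · intro j' _ hne
          exact if_neg (fun hmj => hne (matches_uniq i j' hm.choose hmj hm.choose_spec))
        · intro habs; exact absurd (Finset.mem_univ _) habs
      have hite2 : ¬ ((¬ (∃ j, Matches i j)) ∧ V1 i ≠ 0 ∧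
          (Hyp (V1 i) (c1 i) ∩ interior P).Nonempty) := fun hcon => hcon.1 hm
      have ht : sInner (V1 i) x + c1 i = (lamM i hm.choose * σ hm.choose)
          * (σ hm.choose * (sInner (w hm.choose) x + β hm.choose)) := by
        rw [h1, h2, sInner_smul_left]
        have hs2 := hσsq hm.choose
        linear_combination (-(lamM i hm.choose * (sInner (w hm.choose) x + β hm.choose))) * hs2
      rw [hAB1, hAB2]; dsimp only
      rw [if_neg h0, if_neg h0, dif_pos hm, dif_pos hm, hsum, if_neg hite2]
      by_cases hneg : lamM i hm.choose * σ hm.choose < 0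
      · rw [if_pos hneg, if_pos hneg, ht, relu_mul, hσabs, min_eq_left hneg.le]
        ring
      · rw [if_neg hneg, if_neg hneg, sInner_zero_left, ht, relu_mul, hσabs,
          min_eq_right (not_lt.1 hneg)]
        ring
    by_cases hcr : (Hyp (V1 i) (c1 i) ∩ interior P).Nonempty
    · have hhb := hb_same i
      have hVb : V1 (b i) ≠ 0 := ne_zero_of_hyp_eq h0 hhb
      obtain ⟨hl0, h1, h2⟩ := hlam2 i (b i) hVb hhb.symm
      have hsum0 : (∑ j, if Matches i j then
          |lamM i j| * max (σ j * (sInner (w j) x + β j)) 0 else 0) = 0 :=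
        Finset.sum_eq_zero (fun j _ => if_neg (fun hmj => hm ⟨j, hmj⟩))
      have ht : sInner (V1 i) x + c1 i = lam2 i (b i) * (sInner (V1 (b i)) x + c1 (b i)) := by
        rw [h1, h2, sInner_smul_left]; ring
      rw [hAB1, hAB2]; dsimp only
      have hcond2 : (¬ (∃ j, Matches i j)) ∧ V1 i ≠ 0 ∧
          (Hyp (V1 i) (c1 i) ∩ interior P).Nonempty := ⟨hm, h0, hcr⟩
      rw [if_neg h0, if_neg h0, dif_neg hm, dif_neg hm, if_pos hcr, if_pos hcr, hsum0,
        if_pos hcond2]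
      by_cases hneg : lam2 i (b i) < 0
      · rw [if_pos hneg, if_pos hneg, ht, relu_mul, min_eq_left hneg.le]
        ring
      · rw [if_neg hneg, if_neg hneg, sInner_zero_left, ht, relu_mul,
          min_eq_right (not_lt.1 hneg)]
        ring
    · have hsum0 : (∑ j, if Matches i j then
          |lamM i j| * max (σ j * (sInner (w j) x + β j)) 0 else 0) = 0 :=
        Finset.sum_eq_zero (fun j _ => if_neg (fun hmj => hm ⟨j, hmj⟩))
      have hite2 : ¬ ((¬ (∃ j, Matches i j)) ∧ V1 i ≠ 0 ∧
          (Hyp (V1 i) (c1 i) ∩ interior P).Nonempty) := fun hcon => hcr hcon.2.2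
      have hsigns := signConst hPconv hPsubcl (V1 i) (c1 i)
        (fun y hyI hy0 => hcr ⟨y, hy0, hyI⟩)
      rw [hAB1, hAB2]; dsimp only
      rw [if_neg h0, if_neg h0, dif_neg hm, dif_neg hm, if_neg hcr, if_neg hcr, hsum0,
        if_neg hite2]
      by_cases hP3 : ∀ y ∈ P, 0 ≤ sInner (V1 i) y + c1 i
      · rw [if_pos hP3, if_pos hP3, max_eq_left (hP3 x hx)]
        ring
      · rcases hsigns with hpos | hneg2
        · exact absurd hpos hP3
        · rw [if_neg hP3, if_neg hP3, sInner_zero_left, max_eq_right (hneg2 x hx)]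
          ring
  -- assemble the new network
  refine ⟨Fin.addCases (fun j => σ j • w j) (fun q => AB1 (ι q)),
    Fin.addCases (fun j => σ j * β j) (fun q => AB2 (ι q) + M (ι q)),
    fun p => Fin.addCases
      (fun j => ∑ i ∈ Finset.univ.filter (fun i => Matches i j), V2 p i * |lamM i j|)
      (fun q => V2 p (ι q)),
    fun p => c2 p - ∑ q : Fin k, V2 p (ι q) * M (ι q), ?_, ?_, ?_⟩
  · -- the function equality on P
    intro x hx p
    unfold oneLayer
    rw [Fin.sum_univ_add]
    simp only [Fin.addCases_left, Fin.addCases_right]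
    have hsmulmax : ∀ j : Fin n, max (sInner (σ j • w j) x + σ j * β j) 0
        = max (σ j * (sInner (w j) x + β j)) 0 := by
      intro j
      have h1 : sInner (σ j • w j) x + σ j * β j = σ j * (sInner (w j) x + β j) := by
        rw [sInner_smul_left]; ring
      rw [h1]
    have hq1 : (∑ q : Fin k, V2 p (ι q) * max (sInner (AB1 (ι q)) x + (AB2 (ι q) + M (ι q))) 0)
        = (∑ q : Fin k, V2 p (ι q) * (sInner (AB1 (ι q)) x + AB2 (ι q)))
          + ∑ q : Fin k, V2 p (ι q) * M (ι q) := by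
      rw [← Finset.sum_add_distrib]
      apply Finset.sum_congr rfl
      intro q _
      rw [max_eq_left (by linarith [hM (ι q) x hx])]
      ring
    have hq2 : (∑ q : Fin k, V2 p (ι q) * (sInner (AB1 (ι q)) x + AB2 (ι q)))
        = ∑ i ∈ T, V2 p i * (sInner (AB1 i) x + AB2 i) := by
      rw [← hι_image, Finset.sum_image (fun a _ c' _ h => hι_inj h)]
    have hq3 : (∑ i ∈ T, V2 p i * (sInner (AB1 i) x + AB2 i))
        = ∑ i, V2 p i * (sInner (AB1 i) x + AB2 i) := by
      have hsd := Finset.sum_sdiff (f := fun i => V2 p i * (sInner (AB1 i) x + AB2 i))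
        (Finset.subset_univ (Finset.image rep Finset.univ))
      have himg : (∑ i ∈ Finset.image rep Finset.univ,
          V2 p i * (sInner (AB1 i) x + AB2 i)) = 0 := by
        rw [Finset.sum_image (fun a _ c' _ h => hrepinj h)]
        apply Finset.sum_eq_zero
        intro j _
        rw [(hABrep j).1, (hABrep j).2, sInner_zero_left]
        ring
      rw [hTdef]
      linarith [hsd, himg]
    have hmain : (∑ i, V2 p i * max (sInner (V1 i) x + c1 i) 0)
        = (∑ i, V2 p i * (sInner (AB1 i) x + AB2 i))
          + (∑ i, V2 p i * ∑ j, if Matches i j then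
              |lamM i j| * max (σ j * (sInner (w j) x + β j)) 0 else 0)
          + (∑ i, V2 p i * (if (¬ (∃ j, Matches i j)) ∧ V1 i ≠ 0 ∧
              (Hyp (V1 i) (c1 i) ∩ interior P).Nonempty
              then |lam2 i (b i)| * max (sInner (V1 (b i)) x + c1 (b i)) 0 else 0)) := by
      rw [← Finset.sum_add_distrib, ← Finset.sum_add_distrib]
      apply Finset.sum_congr rfl
      intro i _
      rw [hFmain x hx i]
      ring
    have hmatchsum : (∑ i, V2 p i * ∑ j, if Matches i j then
          |lamM i j| * max (σ j * (sInner (w j) x + β j)) 0 else 0)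
        = ∑ j, (∑ i ∈ Finset.univ.filter (fun i => Matches i j), V2 p i * |lamM i j|)
            * max (σ j * (sInner (w j) x + β j)) 0 := by
      have e1 : ∀ i : Fin (n + k), V2 p i * (∑ j, if Matches i j then
          |lamM i j| * max (σ j * (sInner (w j) x + β j)) 0 else 0)
          = ∑ j, if Matches i j then
              V2 p i * |lamM i j| * max (σ j * (sInner (w j) x + β j)) 0 else 0 := by
        intro i
        rw [Finset.mul_sum]
        apply Finset.sum_congr rfl
        intro j _
        split_ifs
        · ring
        · exact mul_zero _
      rw [Finset.sum_congr rfl (fun i _ => e1 i), Finset.sum_comm]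
      apply Finset.sum_congr rfl
      intro j _
      rw [Finset.sum_mul, Finset.sum_filter]
    have hS2sum : (∑ i, V2 p i * (if (¬ (∃ j, Matches i j)) ∧ V1 i ≠ 0 ∧
          (Hyp (V1 i) (c1 i) ∩ interior P).Nonempty
          then |lam2 i (b i)| * max (sInner (V1 (b i)) x + c1 (b i)) 0 else 0)) = 0 := by
      have e1 : ∀ i : Fin (n + k), V2 p i * (if (¬ (∃ j, Matches i j)) ∧ V1 i ≠ 0 ∧
            (Hyp (V1 i) (c1 i) ∩ interior P).Nonempty
            then |lam2 i (b i)| * max (sInner (V1 (b i)) x + c1 (b i)) 0 else 0)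
          = (if (¬ (∃ j, Matches i j)) ∧ V1 i ≠ 0 ∧
            (Hyp (V1 i) (c1 i) ∩ interior P).Nonempty
            then V2 p i * (|lam2 i (b i)| * max (sInner (V1 (b i)) x + c1 (b i)) 0) else 0) := by
        intro i
        split_ifs
        · rfl
        · exact mul_zero _
      rw [Finset.sum_congr rfl (fun i _ => e1 i), ← Finset.sum_filter]
      set S2 := Finset.univ.filter (fun i : Fin (n + k) => (¬ (∃ j, Matches i j)) ∧ V1 i ≠ 0 ∧
          (Hyp (V1 i) (c1 i) ∩ interior P).Nonempty) with hS2def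
      rw [← Finset.sum_fiberwise_of_maps_to (g := b) (t := S2.image b)
        (fun i hi => Finset.mem_image_of_mem b hi)]
      apply Finset.sum_eq_zero
      intro i0 hi0
      obtain ⟨i1, hi1S, hbi1⟩ := Finset.mem_image.1 hi0
      have hi1S' := Finset.mem_filter.1 hi1S
      obtain ⟨hnm1, hV1i1, hcr1⟩ := hi1S'.2
      have hhyp10 : Hyp (V1 i0) (c1 i0) = Hyp (V1 i1) (c1 i1) := by
        rw [← hbi1]; exact hb_same i1
      have hV0 : V1 i0 ≠ 0 := ne_zero_of_hyp_eq hV1i1 hhyp10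
      have hnm0 : ∀ j, ¬ Matches i0 j := by
        intro j hmj
        apply hnm1
        have hh : Hyp (V1 i1) (c1 i1) = Hyp (w j) (β j) :=
          hhyp10.symm.trans (matches_hyp i0 j hmj)
        obtain ⟨lam, hl0, h1, h2⟩ := hyp_eq (hw j) hV1i1 hh.symm
        exact ⟨j, lam, hl0, h1, h2⟩
      have hcr0 : (Hyp (V1 i0) (c1 i0) ∩ interior P).Nonempty := by
        rw [hhyp10]; exact hcr1
      have hfeq : S2.filter (fun i => b i = i0)
          = Finset.univ.filter (fun i => Hyp (V1 i) (c1 i) = Hyp (V1 i0) (c1 i0)) := by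
        ext i
        simp only [hS2def, Finset.mem_filter, Finset.mem_univ, true_and]
        constructor
        · rintro ⟨⟨hnm, hVi, hcri⟩, hbi⟩
          rw [← hbi]; exact (hb_same i).symm
        · intro hh
          have hhyp1 : Hyp (V1 i) (c1 i) = Hyp (V1 i1) (c1 i1) := hh.trans hhyp10
          have hVi : V1 i ≠ 0 := ne_zero_of_hyp_eq hV1i1 hhyp1
          refine ⟨⟨?_, hVi, ?_⟩, ?_⟩
          · rintro ⟨j, hmj⟩
            apply hnm1
            have hh2 : Hyp (V1 i1) (c1 i1) = Hyp (w j) (β j) :=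
              hhyp1.symm.trans (matches_hyp i j hmj)
            obtain ⟨lam, hl0, h1, h2⟩ := hyp_eq (hw j) hV1i1 hh2.symm
            exact ⟨j, lam, hl0, h1, h2⟩
          · rw [hh]; exact hcr0
          · rw [hb_eq i1 i hhyp1, hbi1]
      have hinner : (∑ i ∈ S2.filter (fun i => b i = i0),
          V2 p i * (|lam2 i (b i)| * max (sInner (V1 (b i)) x + c1 (b i)) 0))
          = (∑ i ∈ Finset.univ.filter
              (fun i => Hyp (V1 i) (c1 i) = Hyp (V1 i0) (c1 i0)), V2 p i * |lam2 i i0|)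
            * max (sInner (V1 i0) x + c1 i0) 0 := by
        rw [← hfeq, Finset.sum_mul]
        apply Finset.sum_congr rfl
        intro i hi
        have hbi : b i = i0 := (Finset.mem_filter.1 hi).2
        rw [hbi]
        ring
      rw [hinner, hC i0 hV0 hnm0 hcr0 p, zero_mul]
    rw [Finset.sum_congr rfl (fun j (_ : j ∈ Finset.univ) => by rw [hsmulmax j] :
      ∀ j ∈ Finset.univ, (∑ i ∈ Finset.univ.filter (fun i => Matches i j),
        V2 p i * |lamM i j|) * max (sInner (σ j • w j) x + σ j * β j) 0
        = (∑ i ∈ Finset.univ.filter (fun i => Matches i j), V2 p i * |lamM i j|)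
          * max (σ j * (sInner (w j) x + β j)) 0)]
    linarith [hq1, hq2, hq3, hmain, hmatchsum, hS2sum]
  · -- the visible rows
    intro j
    constructor
    · simp only [Fin.addCases_left]
      exact smul_ne_zero (hσ0 j) (hw j)
    · simp only [Fin.addCases_left]
      exact hyp_smul (w j) (β j) (hσ0 j)
  · -- the spare rows never vanish on P
    intro q x hx
    simp only [Fin.addCases_right]
    have h1 := hM (ι q) x hx
    intro hcon
    rw [← add_assoc] at hcon
    linarith


end ReLUNet
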